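/- Let H be a real Hilbert space and T > 0. Suppose z_n → z in H¹(0,T; V*) ∩ L²(0,T; H) for a Hilbert triplet V ⊂ H ⊂ V* with V separable, and y ∈ H¹(0,T;H) ∩ L²(0,T;V). If the Leibniz identity (y(t₂),z_n(t₂))_H − (y(t₁),z_n(t₁))_H = ∫_{t₁}^{t₂} [(y'(s),z_n(s))_H + ⟨z_n'(s),y(s)⟩_V] ds holds for each n (e.g. because z_n ∈ H¹(0,T;H)), then the same identity holds with z_n replaced by z, for every t₁, t₂ ∈ [0,T]. -/

import Mathlib

open MeasureTheory Filter

private lemma memLp_integrable_inner {α E : Type*} [MeasurableSpace α] {μ : Measure α}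
    [NormedAddCommGroup E] [InnerProductSpace ℝ E] {f g : α → E}
    (hf : MemLp f 2 μ) (hg : MemLp g 2 μ) :
    Integrable (fun x => (inner ℝ (f x) (g x) : ℝ)) μ := by
  have h := MeasureTheory.L2.integrable_inner (𝕜 := ℝ) (hf.toLp f) (hg.toLp g)
  refine h.congr ?_
  filter_upwards [hf.coeFn_toLp, hg.coeFn_toLp] with x hx hy
  rw [hx, hy]

private lemma memLp_integrable_mul {α : Type*} [MeasurableSpace α] {μ : Measure α}
    {f g : α → ℝ} (hf : MemLp f 2 μ) (hg : MemLp g 2 μ) :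
    Integrable (fun x => f x * g x) μ := by
  have := memLp_integrable_inner hf hg
  simpa [RCLike.inner_apply, starRingEnd_apply, mul_comm] using this

private lemma memLp_integrable_sq {α : Type*} [MeasurableSpace α] {μ : Measure α}
    {E : Type*} [NormedAddCommGroup E]
    {f : α → E} (hf : MemLp f 2 μ) :
    Integrable (fun x => ‖f x‖ ^ 2) μ := by
  have := memLp_integrable_mul hf.norm hf.norm
  simpa [sq] using this

private lemma tendsto_integral_mul_norm {α E F : Type*} [MeasurableSpace α] {μ : Measure α}
    [IsFiniteMeasure μ] [NormedAddCommGroup E] [NormedAddCommGroup F]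
    {g : α → E} (hg : MemLp g 2 μ) {f : ℕ → α → F} (hf : ∀ n, MemLp (f n) 2 μ)
    (h : Tendsto (fun n => ∫ t, ‖f n t‖ ^ 2 ∂μ) atTop (nhds 0)) :
    Tendsto (fun n => ∫ t, ‖g t‖ * ‖f n t‖ ∂μ) atTop (nhds 0) := by
  have hA : Integrable (fun t => ‖g t‖ ^ 2) μ := memLp_integrable_sq hg
  set A := ∫ t, ‖g t‖ ^ 2 ∂μ with hAdef
  have hA0 : 0 ≤ A := integral_nonneg fun t => sq_nonneg _
  have key : ∀ ε : ℝ, 0 < ε → ∀ n,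
      ∫ t, ‖g t‖ * ‖f n t‖ ∂μ ≤ (ε * A + ε⁻¹ * (∫ t, ‖f n t‖ ^ 2 ∂μ)) / 2 := by
    intro ε hε n
    have hfn2 : Integrable (fun t => ‖f n t‖ ^ 2) μ := memLp_integrable_sq (hf n)
    have hlhs : Integrable (fun t => ‖g t‖ * ‖f n t‖) μ :=
      memLp_integrable_mul hg.norm (hf n).norm
    have hrhs : Integrable (fun t => (ε * ‖g t‖ ^ 2 + ε⁻¹ * ‖f n t‖ ^ 2) / 2) μ :=
      ((hA.const_mul ε).add (hfn2.const_mul ε⁻¹)).div_const 2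
    have hmono : ∀ t, ‖g t‖ * ‖f n t‖ ≤ (ε * ‖g t‖ ^ 2 + ε⁻¹ * ‖f n t‖ ^ 2) / 2 := by
      intro t
      set a := ‖g t‖; set b := ‖f n t‖
      have h1 : 0 ≤ ε⁻¹ * (ε * a - b) ^ 2 :=
        mul_nonneg (inv_nonneg.2 hε.le) (sq_nonneg _)
      have h2 : ε⁻¹ * (ε * a - b) ^ 2 = ε * a ^ 2 - 2 * (a * b) + ε⁻¹ * b ^ 2 := by
        field_simp
        ring
      linarith [h2 ▸ h1]
    calc ∫ t, ‖g t‖ * ‖f n t‖ ∂μ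
        ≤ ∫ t, (ε * ‖g t‖ ^ 2 + ε⁻¹ * ‖f n t‖ ^ 2) / 2 ∂μ :=
          integral_mono hlhs hrhs hmono
      _ = (ε * A + ε⁻¹ * (∫ t, ‖f n t‖ ^ 2 ∂μ)) / 2 := by
          rw [integral_div, integral_add (hA.const_mul ε) (hfn2.const_mul ε⁻¹),
            MeasureTheory.integral_const_mul, MeasureTheory.integral_const_mul]
  rw [Metric.tendsto_atTop] at h ⊢
  intro δ hδ
  have hA1 : 0 < A + 1 := by linarith
  set ε := δ / (A + 1) with hεdef
  have hε : 0 < ε := div_pos hδ hA1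
  obtain ⟨N, hN⟩ := h (ε ^ 2) (by positivity)
  refine ⟨N, fun n hn => ?_⟩
  have hI : (∫ t, ‖f n t‖ ^ 2 ∂μ) < ε ^ 2 := by
    have := hN n hn
    rw [Real.dist_eq, sub_zero] at this
    exact (abs_lt.1 this).2
  have hnn : 0 ≤ ∫ t, ‖g t‖ * ‖f n t‖ ∂μ :=
    integral_nonneg fun t => mul_nonneg (norm_nonneg _) (norm_nonneg _)
  rw [Real.dist_eq, sub_zero, abs_of_nonneg hnn]
  calc ∫ t, ‖g t‖ * ‖f n t‖ ∂μ
      ≤ (ε * A + ε⁻¹ * (∫ t, ‖f n t‖ ^ 2 ∂μ)) / 2 := key ε hε n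
    _ < (ε * A + ε⁻¹ * ε ^ 2) / 2 := by
        have : ε⁻¹ * (∫ t, ‖f n t‖ ^ 2 ∂μ) < ε⁻¹ * ε ^ 2 :=
          mul_lt_mul_of_pos_left hI (inv_pos.2 hε)
        linarith
    _ = ε * (A + 1) / 2 := by field_simp
    _ = δ / 2 := by rw [hεdef]; field_simp
    _ < δ := by linarith

/-- L² convergence implies L¹ convergence on a finite measure space. -/
private lemma tendsto_integral_norm_of_sq {α F : Type*} [MeasurableSpace α] {μ : Measure α}
    [IsFiniteMeasure μ] [NormedAddCommGroup F]
    {f : ℕ → α → F} (hf : ∀ n, MemLp (f n) 2 μ)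
    (h : Tendsto (fun n => ∫ t, ‖f n t‖ ^ 2 ∂μ) atTop (nhds 0)) :
    Tendsto (fun n => ∫ t, ‖f n t‖ ∂μ) atTop (nhds 0) := by
  have := tendsto_integral_mul_norm (g := fun _ : α => (1 : ℝ)) (memLp_const 1) hf h
  simpa using this

/-- The canonical embedding `H ⊂ V*` of a Hilbert triplet `V ⊂ H ⊂ V*`. -/
noncomputable def tripletEmb {V H : Type*} [NormedAddCommGroup V] [InnerProductSpace ℝ V]
    [NormedAddCommGroup H] [InnerProductSpace ℝ H]
    (j : V →L[ℝ] H) (h : H) : StrongDual ℝ V := (innerSL ℝ h).comp j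

/-- Approximation step in the proof of the Leibniz rule (Lemma 4.7): if
`zₙ → z` in `H¹(0,T;V*) ∩ L²(0,T;H)` (with `H`-representatives `zHₙ → zH` in `L²(0,T;H)`),
`y ∈ H¹(0,T;H) ∩ L²(0,T;V)`, and the Leibniz identity
`(y(t₂),zₙ(t₂))_H − (y(t₁),zₙ(t₁))_H = ∫_{t₁}^{t₂}[(y'(s),zₙ(s))_H + ⟨zₙ'(s),y(s)⟩_V] ds`
holds for each `n`, then the same identity holds in the limit with `zₙ` replaced by `z`. -/
theorem leibniz_identity_limit
    {V H : Type*} [NormedAddCommGroup V] [InnerProductSpace ℝ V] [CompleteSpace V]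
    [NormedAddCommGroup H] [InnerProductSpace ℝ H] [CompleteSpace H]
    (j : V →L[ℝ] H) (hj_inj : Function.Injective j) (hj_dense : DenseRange j)
    (T : ℝ) (hT : 0 < T)
    (y : ℝ → V) (y' : ℝ → H)
    (zn : ℕ → ℝ → StrongDual ℝ V) (zn' : ℕ → ℝ → StrongDual ℝ V)
    (zHn : ℕ → ℝ → H)
    (z : ℝ → StrongDual ℝ V) (z' : ℝ → StrongDual ℝ V) (zH : ℝ → H)
    -- y ∈ H¹(0,T;H) ∩ L²(0,T;V)
    (hyFTC : ∀ t ∈ Set.Icc 0 T, j (y t) = j (y 0) + ∫ s in (0 : ℝ)..t, y' s)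
    (hy' : MemLp y' 2 (volume.restrict (Set.Ioo 0 T)))
    (hyV : MemLp y 2 (volume.restrict (Set.Ioo 0 T)))
    -- zₙ, z ∈ H¹(0,T;V*) ∩ L²(0,T;H)
    (hznFTC : ∀ n, ∀ t ∈ Set.Icc 0 T, zn n t = zn n 0 + ∫ s in (0 : ℝ)..t, zn' n s)
    (hzn' : ∀ n, MemLp (zn' n) 2 (volume.restrict (Set.Ioo 0 T)))
    (hzHn : ∀ n, ∀ᵐ t ∂(volume.restrict (Set.Ioo 0 T)), zn n t = tripletEmb j (zHn n t))
    (hzHnL2 : ∀ n, MemLp (zHn n) 2 (volume.restrict (Set.Ioo 0 T)))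
    (hzFTC : ∀ t ∈ Set.Icc 0 T, z t = z 0 + ∫ s in (0 : ℝ)..t, z' s)
    (hz' : MemLp z' 2 (volume.restrict (Set.Ioo 0 T)))
    (hzH : ∀ᵐ t ∂(volume.restrict (Set.Ioo 0 T)), z t = tripletEmb j (zH t))
    (hzHL2 : MemLp zH 2 (volume.restrict (Set.Ioo 0 T)))
    -- convergence zₙ → z in H¹(0,T;V*) ∩ L²(0,T;H):
    (hconv1 : Tendsto (fun n => ∫ t in Set.Ioo 0 T, ‖zn n t - z t‖ ^ 2) atTop (nhds 0))
    (hconv2 : Tendsto (fun n => ∫ t in Set.Ioo 0 T, ‖zn' n t - z' t‖ ^ 2) atTop (nhds 0))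
    (hconv3 : Tendsto (fun n => ∫ t in Set.Ioo 0 T, ‖zHn n t - zH t‖ ^ 2) atTop (nhds 0))
    -- the Leibniz identity for each n
    (hid : ∀ n, ∀ t₁ ∈ Set.Icc 0 T, ∀ t₂ ∈ Set.Icc 0 T,
      zn n t₂ (y t₂) - zn n t₁ (y t₁)
        = ∫ s in t₁..t₂, ((inner ℝ (y' s) (zHn n s) : ℝ) + zn' n s (y s))) :
    ∀ t₁ ∈ Set.Icc 0 T, ∀ t₂ ∈ Set.Icc 0 T,
      z t₂ (y t₂) - z t₁ (y t₁)
        = ∫ s in t₁..t₂, ((inner ℝ (y' s) (zH s) : ℝ) + z' s (y s)) := by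
  intro t₁ ht₁ t₂ ht₂
  set μ : Measure ℝ := volume.restrict (Set.Ioo 0 T) with hμdef
  haveI : IsFiniteMeasure μ := by
    constructor
    rw [hμdef, Measure.restrict_apply_univ]
    exact measure_Ioo_lt_top
  -- the embedding as a continuous linear map
  set E : H →L[ℝ] StrongDual ℝ V :=
    ((ContinuousLinearMap.compL ℝ V H ℝ).flip j).comp (innerSL ℝ) with hEdef
  have hE : ∀ h : H, E h = tripletEmb j h := fun _ => rfl
  -- L² membership of zn n and z
  have hznL2 : ∀ n, MemLp (zn n) 2 μ := fun n =>
    (E.comp_memLp' (hzHnL2 n)).ae_eq ((hzHn n).mono fun t ht => ht.symm)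
  have hzL2 : MemLp z 2 μ :=
    (E.comp_memLp' hzHL2).ae_eq (hzH.mono fun t ht => ht.symm)
  -- differences
  have hdz : ∀ n, MemLp (fun t => zn n t - z t) 2 μ := fun n => (hznL2 n).sub hzL2
  have hdz' : ∀ n, MemLp (fun t => zn' n t - z' t) 2 μ := fun n => (hzn' n).sub hz'
  have hdzH : ∀ n, MemLp (fun t => zHn n t - zH t) 2 μ := fun n => (hzHnL2 n).sub hzHL2
  -- L¹ convergences
  have hc : Tendsto (fun n => ∫ t, ‖zn n t - z t‖ ∂μ) atTop (nhds 0) :=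
    tendsto_integral_norm_of_sq hdz hconv1
  have hb : Tendsto (fun n => ∫ t, ‖zn' n t - z' t‖ ∂μ) atTop (nhds 0) :=
    tendsto_integral_norm_of_sq hdz' hconv2
  set cn : ℕ → ℝ := fun n => ∫ t, ‖zn n t - z t‖ ∂μ with hcn
  set bn : ℕ → ℝ := fun n => ∫ t, ‖zn' n t - z' t‖ ∂μ with hbn
  -- ae subset fact
  have hsub : ∀ a ∈ Set.Icc (0:ℝ) T, ∀ b ∈ Set.Icc (0:ℝ) T,
      Set.uIoc a b ≤ᵐ[volume] Set.Ioo 0 T := by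
    intro a ha b hb
    have h1 : Set.uIoc a b ⊆ Set.Ioc 0 T := by
      intro x hx
      rcases hx with ⟨hx1, hx2⟩
      constructor
      · exact lt_of_le_of_lt (le_min ha.1 hb.1) hx1
      · exact hx2.trans (max_le ha.2 hb.2)
    exact (HasSubset.Subset.eventuallyLE h1).trans (Ioo_ae_eq_Ioc (a := (0:ℝ)) (b := T)).symm.le
  -- interval integrability of zn' n and z' on subintervals of [0,T]
  have hIoc' : ∀ n, IntegrableOn (zn' n) (Set.Icc 0 T) volume := fun n => by
    exact (integrableOn_Icc_iff_integrableOn_Ioo (f := zn' n) (a := 0) (b := T)).2 ((hzn' n).integrable one_le_two)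
  have hIocz' : IntegrableOn z' (Set.Icc 0 T) volume := by
    exact (integrableOn_Icc_iff_integrableOn_Ioo (f := z') (a := 0) (b := T)).2 (hz'.integrable one_le_two)
  have hII' : ∀ n, ∀ a ∈ Set.Icc (0:ℝ) T, ∀ b ∈ Set.Icc (0:ℝ) T,
      IntervalIntegrable (zn' n) volume a b := fun n a ha b hb =>
    ((hIoc' n).mono_set (Set.uIcc_subset_Icc ha hb)).intervalIntegrable
  have hIIz' : ∀ a ∈ Set.Icc (0:ℝ) T, ∀ b ∈ Set.Icc (0:ℝ) T,
      IntervalIntegrable z' volume a b := fun a ha b hb =>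
    (hIocz'.mono_set (Set.uIcc_subset_Icc ha hb)).intervalIntegrable
  -- key uniform estimate
  have hkey : ∀ n, ∀ t ∈ Set.Icc 0 T, ‖zn n t - z t‖ ≤ (cn n + T * bn n) / T := by
    intro n t ht
    have step1 : ∀ t' ∈ Set.Icc (0:ℝ) T, ‖zn n t - z t‖ ≤ ‖zn n t' - z t'‖ + bn n := by
      intro t' ht'
      have h0 : (0:ℝ) ∈ Set.Icc (0:ℝ) T := Set.left_mem_Icc.2 hT.le
      have e1 : zn n t - zn n t' = ∫ s in t'..t, zn' n s := by
        rw [hznFTC n t ht, hznFTC n t' ht', add_sub_add_left_eq_sub]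
        exact intervalIntegral.integral_interval_sub_left
          (hII' n 0 h0 t ht) (hII' n 0 h0 t' ht')
      have e2 : z t - z t' = ∫ s in t'..t, z' s := by
        rw [hzFTC t ht, hzFTC t' ht', add_sub_add_left_eq_sub]
        exact intervalIntegral.integral_interval_sub_left
          (hIIz' 0 h0 t ht) (hIIz' 0 h0 t' ht')
      have e3 : zn n t - z t = (zn n t' - z t') + ∫ s in t'..t, (zn' n s - z' s) := by
        rw [intervalIntegral.integral_sub (hII' n t' ht' t ht) (hIIz' t' ht' t ht),
          ← e1, ← e2]
        abel
      have e4 : ‖∫ s in t'..t, (zn' n s - z' s)‖ ≤ bn n := by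
        refine le_trans (intervalIntegral.norm_integral_le_integral_norm_uIoc) ?_
        refine setIntegral_mono_set ?_ ?_ (hsub t' ht' t ht)
        · exact ((hdz' n).integrable one_le_two).norm
        · exact Filter.Eventually.of_forall fun s => norm_nonneg _
      calc ‖zn n t - z t‖ ≤ ‖zn n t' - z t'‖ + ‖∫ s in t'..t, (zn' n s - z' s)‖ := by
            rw [e3]; exact norm_add_le _ _
        _ ≤ ‖zn n t' - z t'‖ + bn n := by linarith
    -- integrate over t' ∈ Ioo 0 T
    have hInt1 : IntegrableOn (fun _ : ℝ => ‖zn n t - z t‖) (Set.Ioo 0 T) volume :=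
      integrableOn_const measure_Ioo_lt_top.ne
    have hInt2 : IntegrableOn (fun t' => ‖zn n t' - z t'‖ + bn n) (Set.Ioo 0 T) volume :=
      (((hdz n).integrable one_le_two).norm.add (integrable_const _))
    have hmono := setIntegral_mono_on hInt1 hInt2 measurableSet_Ioo
      (fun t' ht' => step1 t' (Set.Ioo_subset_Icc_self ht'))
    have hvol : (volume (Set.Ioo (0:ℝ) T)).toReal = T := by
      rw [Real.volume_Ioo, ENNReal.toReal_ofReal (by linarith)]
      simp
    rw [setIntegral_const, measureReal_def, hvol, smul_eq_mul] at hmono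
    have hRHSeq : ∫ t' in Set.Ioo 0 T, (‖zn n t' - z t'‖ + bn n) = cn n + T * bn n := by
      rw [integral_add ((hdz n).integrable one_le_two).norm (integrable_const _),
        setIntegral_const, measureReal_def, hvol, smul_eq_mul]
    rw [hRHSeq] at hmono
    rw [le_div_iff₀ hT]
    linarith
  -- the uniform bound tends to zero
  have hd : Tendsto (fun n => (cn n + T * bn n) / T) atTop (nhds 0) := by
    have := (hc.add (hb.const_mul T)).div_const T
    simpa using this
  -- pointwise convergence of the left-hand side
  have hpt : ∀ t ∈ Set.Icc 0 T, Tendsto (fun n => zn n t (y t)) atTop (nhds (z t (y t))) := by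
    intro t ht
    rw [tendsto_iff_norm_sub_tendsto_zero]
    refine squeeze_zero (fun n => norm_nonneg _) (fun n => ?_) (by simpa using hd.mul_const ‖y t‖)
    calc ‖zn n t (y t) - z t (y t)‖ = ‖(zn n t - z t) (y t)‖ := by
          rw [ContinuousLinearMap.sub_apply]
      _ ≤ ‖zn n t - z t‖ * ‖y t‖ := ContinuousLinearMap.le_opNorm _ _
      _ ≤ (cn n + T * bn n) / T * ‖y t‖ :=
          mul_le_mul_of_nonneg_right (hkey n t ht) (norm_nonneg _)
  -- integrability of the integrands
  have hIntn : ∀ n, Integrable (fun s => (inner ℝ (y' s) (zHn n s) : ℝ) + zn' n s (y s)) μ := by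
    intro n
    refine (memLp_integrable_inner hy' (hzHnL2 n)).add ?_
    refine Integrable.mono' (memLp_integrable_mul (hzn' n).norm hyV.norm) ?_ ?_
    · exact (ContinuousLinearMap.id ℝ (StrongDual ℝ V)).aestronglyMeasurable_comp₂
        (hzn' n).aestronglyMeasurable hyV.aestronglyMeasurable
    · exact Filter.Eventually.of_forall fun s => ContinuousLinearMap.le_opNorm _ _
  have hIntlim : Integrable (fun s => (inner ℝ (y' s) (zH s) : ℝ) + z' s (y s)) μ := by
    refine (memLp_integrable_inner hy' hzHL2).add ?_
    refine Integrable.mono' (memLp_integrable_mul hz'.norm hyV.norm) ?_ ?_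
    · exact (ContinuousLinearMap.id ℝ (StrongDual ℝ V)).aestronglyMeasurable_comp₂
        hz'.aestronglyMeasurable hyV.aestronglyMeasurable
    · exact Filter.Eventually.of_forall fun s => ContinuousLinearMap.le_opNorm _ _
  have hIIn : ∀ n, IntervalIntegrable
      (fun s => (inner ℝ (y' s) (zHn n s) : ℝ) + zn' n s (y s)) volume t₁ t₂ := by
    intro n
    refine IntegrableOn.intervalIntegrable ?_
    refine IntegrableOn.mono_set ?_ (Set.uIcc_subset_Icc ht₁ ht₂)
    rw [integrableOn_Icc_iff_integrableOn_Ioo]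
    exact hIntn n
  have hIIlim : IntervalIntegrable
      (fun s => (inner ℝ (y' s) (zH s) : ℝ) + z' s (y s)) volume t₁ t₂ := by
    refine IntegrableOn.intervalIntegrable ?_
    refine IntegrableOn.mono_set ?_ (Set.uIcc_subset_Icc ht₁ ht₂)
    rw [integrableOn_Icc_iff_integrableOn_Ioo]
    exact hIntlim
  -- convergence of the right-hand side
  have he1 : Tendsto (fun n => ∫ s, ‖y' s‖ * ‖zHn n s - zH s‖ ∂μ) atTop (nhds 0) :=
    tendsto_integral_mul_norm hy' hdzH hconv3
  have he2 : Tendsto (fun n => ∫ s, ‖y s‖ * ‖zn' n s - z' s‖ ∂μ) atTop (nhds 0) :=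
    tendsto_integral_mul_norm hyV hdz' hconv2
  have hRHS : Tendsto
      (fun n => ∫ s in t₁..t₂, ((inner ℝ (y' s) (zHn n s) : ℝ) + zn' n s (y s))) atTop
      (nhds (∫ s in t₁..t₂, ((inner ℝ (y' s) (zH s) : ℝ) + z' s (y s)))) := by
    rw [tendsto_iff_norm_sub_tendsto_zero]
    refine squeeze_zero (fun n => norm_nonneg _) (fun n => ?_) (by simpa using he1.add he2)
    have hdiffInt : Integrable (fun s =>
        ((inner ℝ (y' s) (zHn n s) : ℝ) + zn' n s (y s))
          - ((inner ℝ (y' s) (zH s) : ℝ) + z' s (y s))) μ := (hIntn n).sub hIntlim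
    have hsumInt : Integrable (fun s =>
        ‖y' s‖ * ‖zHn n s - zH s‖ + ‖y s‖ * ‖zn' n s - z' s‖) μ :=
      (memLp_integrable_mul hy'.norm (hdzH n).norm).add
        (memLp_integrable_mul hyV.norm (hdz' n).norm)
    calc ‖(∫ s in t₁..t₂, ((inner ℝ (y' s) (zHn n s) : ℝ) + zn' n s (y s)))
          - ∫ s in t₁..t₂, ((inner ℝ (y' s) (zH s) : ℝ) + z' s (y s))‖
        = ‖∫ s in t₁..t₂, (((inner ℝ (y' s) (zHn n s) : ℝ) + zn' n s (y s))
            - ((inner ℝ (y' s) (zH s) : ℝ) + z' s (y s)))‖ := by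
          rw [intervalIntegral.integral_sub (hIIn n) hIIlim]
      _ ≤ ∫ s in Set.uIoc t₁ t₂, ‖((inner ℝ (y' s) (zHn n s) : ℝ) + zn' n s (y s))
            - ((inner ℝ (y' s) (zH s) : ℝ) + z' s (y s))‖ :=
          intervalIntegral.norm_integral_le_integral_norm_uIoc
      _ ≤ ∫ s in Set.Ioo 0 T, ‖((inner ℝ (y' s) (zHn n s) : ℝ) + zn' n s (y s))
            - ((inner ℝ (y' s) (zH s) : ℝ) + z' s (y s))‖ := by
          refine setIntegral_mono_set hdiffInt.norm
            (Filter.Eventually.of_forall fun s => norm_nonneg _) (hsub t₁ ht₁ t₂ ht₂)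
      _ ≤ ∫ s in Set.Ioo 0 T, (‖y' s‖ * ‖zHn n s - zH s‖ + ‖y s‖ * ‖zn' n s - z' s‖) := by
          refine integral_mono hdiffInt.norm hsumInt fun s => ?_
          have heq : ((inner ℝ (y' s) (zHn n s) : ℝ) + zn' n s (y s))
              - ((inner ℝ (y' s) (zH s) : ℝ) + z' s (y s))
              = (inner ℝ (y' s) (zHn n s - zH s) : ℝ) + (zn' n s - z' s) (y s) := by
            rw [inner_sub_right, ContinuousLinearMap.sub_apply]
            ring
          rw [heq]
          refine le_trans (norm_add_le _ _) ?_
          gcongr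
          · calc ‖(inner ℝ (y' s) (zHn n s - zH s) : ℝ)‖
                = |(inner ℝ (y' s) (zHn n s - zH s) : ℝ)| := rfl
              _ ≤ ‖y' s‖ * ‖zHn n s - zH s‖ := abs_real_inner_le_norm _ _
          · calc ‖(zn' n s - z' s) (y s)‖ ≤ ‖zn' n s - z' s‖ * ‖y s‖ :=
                ContinuousLinearMap.le_opNorm _ _
              _ = ‖y s‖ * ‖zn' n s - z' s‖ := mul_comm _ _
      _ = (∫ s, ‖y' s‖ * ‖zHn n s - zH s‖ ∂μ) + ∫ s, ‖y s‖ * ‖zn' n s - z' s‖ ∂μ :=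
          integral_add (memLp_integrable_mul hy'.norm (hdzH n).norm)
            (memLp_integrable_mul hyV.norm (hdz' n).norm)
  -- conclusion
  have hLHS : Tendsto (fun n => zn n t₂ (y t₂) - zn n t₁ (y t₁)) atTop
      (nhds (z t₂ (y t₂) - z t₁ (y t₁))) := (hpt t₂ ht₂).sub (hpt t₁ ht₁)
  have heq : (fun n => zn n t₂ (y t₂) - zn n t₁ (y t₁))
      = fun n => ∫ s in t₁..t₂, ((inner ℝ (y' s) (zHn n s) : ℝ) + zn' n s (y s)) :=
    funext fun n => hid n t₁ ht₁ t₂ ht₂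
  rw [heq] at hLHS
  exact tendsto_nhds_unique hLHS hRHS
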